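/- arXiv:1901.02479 — 4 statements merged into one kernel-verified Lean document; each statement's English description precedes it below -/
import Mathlib

section
/- Let G be the specified graph on 12 vertices. Then for every natural number N, if there exists a covering array with forbidden edges CAFE(N;G), then N ≥ 12. -/
/-- The forbidden-edge graph `G` on vertex set `Fin 4 × Fin 3`. -/
def EdgeSet : Set (Sym2 (Fin 4 × Fin 3)) :=
  {s((0, 0), (1, 0)), s((2, 0), (3, 0)), s((0, 1), (2, 1)),
   s((1, 1), (3, 1)), s((0, 2), (3, 2)), s((1, 2), (2, 2))}

/-- A row `c` avoids `G` if no pair of its entries forms an edge of `G`. -/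
def Avoids (c : Fin 4 → Fin 3) : Prop :=
  ∀ i j : Fin 4, i ≠ j → s((i, c i), (j, c j)) ∉ EdgeSet

/-- A covering array with forbidden edges `CAFE(N; G)`. -/
def IsCAFE {N : ℕ} (A : Fin N → Fin 4 → Fin 3) : Prop :=
  (∀ r, Avoids (A r)) ∧
  ∀ i j : Fin 4, i ≠ j → ∀ a b : Fin 3,
    s((i, a), (j, b)) ∉ EdgeSet → ∃ r, A r i = a ∧ A r j = b

instance : DecidablePred (· ∈ EdgeSet) := fun x =>
  decidable_of_iff (x = s((0, 0), (1, 0)) ∨ x = s((2, 0), (3, 0)) ∨ x = s((0, 1), (2, 1)) ∨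
    x = s((1, 1), (3, 1)) ∨ x = s((0, 2), (3, 2)) ∨ x = s((1, 2), (2, 2)))
    (by simp [EdgeSet])

/-- Twelve requirements: for each pair of columns (whose unique forbidden edge has some
symbol `s`), the two ordered patterns using the two symbols other than `s`. -/
def reqs : Fin 12 → Fin 4 × Fin 4 × Fin 3 × Fin 3 :=
  ![(0, 1, 1, 2), (0, 1, 2, 1), (2, 3, 1, 2), (2, 3, 2, 1),
    (0, 2, 0, 2), (0, 2, 2, 0), (1, 3, 0, 2), (1, 3, 2, 0),
    (0, 3, 0, 1), (0, 3, 1, 0), (1, 2, 0, 1), (1, 2, 1, 0)]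

def Sat (c : Fin 4 → Fin 3) (k : Fin 12) : Prop :=
  c (reqs k).1 = (reqs k).2.2.1 ∧ c (reqs k).2.1 = (reqs k).2.2.2

instance (c : Fin 4 → Fin 3) (k : Fin 12) : Decidable (Sat c k) := by
  unfold Sat; infer_instance

instance : DecidablePred Avoids := fun c => by
  unfold Avoids; infer_instance

/-- No avoiding row satisfies two distinct requirements. -/
lemma key : ∀ c : Fin 4 → Fin 3, Avoids c → ∀ p q : Fin 12, Sat c p → Sat c q → p = q := by
  decide

lemma hne : ∀ k : Fin 12, (reqs k).1 ≠ (reqs k).2.1 ∧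
    s(((reqs k).1, (reqs k).2.2.1), ((reqs k).2.1, (reqs k).2.2.2)) ∉ EdgeSet := by
  decide

theorem optimal_size :
    ∀ N : ℕ, (∃ A : Fin N → Fin 4 → Fin 3, IsCAFE A) → 12 ≤ N := by
  rintro N ⟨A, hAvoid, hCov⟩
  choose f hf using fun k : Fin 12 =>
    hCov (reqs k).1 (reqs k).2.1 (hne k).1 (reqs k).2.2.1 (reqs k).2.2.2 (hne k).2
  have hinj : Function.Injective f := by
    intro p q hpq
    exact key (A (f p)) (hAvoid (f p)) p q ⟨(hf p).1, (hf p).2⟩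
      (hpq ▸ ⟨(hf q).1, (hf q).2⟩)
  simpa using Fintype.card_le_of_injective f hinj
end

section
/- The explicit 12 × 4 array over Fin 3 with rows (1,2,0,2), (2,1,2,0), (0,1,1,2), (1,0,2,1), (0,1,2,0), (2,0,0,1), (1,0,2,2), (2,2,1,0), (0,2,1,1), (1,1,2,0), (2,0,1,0), (0,1,0,2) is a CAFE(12;G); in particular a CAFE(12;G) exists. -/
/-- The explicit 12 × 4 array. -/
def A₀ : Fin 12 → Fin 4 → Fin 3 :=
  ![![1, 2, 0, 2], ![2, 1, 2, 0], ![0, 1, 1, 2], ![1, 0, 2, 1],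
    ![0, 1, 2, 0], ![2, 0, 0, 1], ![1, 0, 2, 2], ![2, 2, 1, 0],
    ![0, 2, 1, 1], ![1, 1, 2, 0], ![2, 0, 1, 0], ![0, 1, 0, 2]]

theorem explicit_array_is_CAFE :
    IsCAFE A₀ ∧ ∃ A : Fin 12 → Fin 4 → Fin 3, IsCAFE A := by
  have h : IsCAFE A₀ := by
    constructor
    · intro r i j hij
      simp only [EdgeSet, Set.mem_insert_iff, Set.mem_singleton_iff]
      revert hij; revert i j; revert r; decide
    · intro i j hij a b hne
      simp only [EdgeSet, Set.mem_insert_iff, Set.mem_singleton_iff] at hne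
      revert hne; revert hij; revert a b; revert i j; decide
  exact ⟨h, A₀, h⟩
end

section
/- Every CAFE(12;G) has exactly one uniform column: for every CAFE(12;G) given by A : Fin 12 → Fin 4 → Fin 3, there exists a unique column i : Fin 4 such that every symbol s : Fin 3 occurs exactly 4 times in column i of A. -/
instance inst_s3 : DecidablePred (· ∈ EdgeSet) := fun e =>
  decidable_of_iff (e = s((0, 0), (1, 0)) ∨ e = s((2, 0), (3, 0)) ∨ e = s((0, 1), (2, 1)) ∨
    e = s((1, 1), (3, 1)) ∨ e = s((0, 2), (3, 2)) ∨ e = s((1, 2), (2, 2))) (by simp [EdgeSet])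

variable (A : Fin 12 → Fin 4 → Fin 3)

/-- Count of symbol `x` in column `i`. -/
def cnt (i : Fin 4) (x : Fin 3) : ℕ := (Finset.univ.filter (fun r : Fin 12 => A r i = x)).card

/-- Count of rows with the pattern `(x, y)` in columns `(i, j)`. -/
def nn (i j : Fin 4) (x y : Fin 3) : ℕ :=
  (Finset.univ.filter (fun r : Fin 12 => A r i = x ∧ A r j = y)).card

lemma card_filter_and_sum (p : Fin 12 → Prop) [DecidablePred p] (j : Fin 4) :
    (Finset.univ.filter p).card
      = ∑ y : Fin 3, (Finset.univ.filter (fun r => p r ∧ A r j = y)).card := by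
  rw [Finset.card_eq_sum_card_fiberwise (f := fun r => A r j) (t := Finset.univ) (by simp)]
  simp [Finset.filter_filter]

lemma cnt_row (i j : Fin 4) (x : Fin 3) :
    cnt A i x = nn A i j x 0 + nn A i j x 1 + nn A i j x 2 := by
  rw [cnt, card_filter_and_sum A (fun r => A r i = x) j, Fin.sum_univ_three]
  rfl

lemma nn_comm (i j : Fin 4) (x : Fin 3) (y : Fin 3) :
    nn A i j x y = (Finset.univ.filter (fun r : Fin 12 => A r j = y ∧ A r i = x)).card := by
  unfold nn; congr 1; ext r; simp [and_comm]

lemma cnt_col (i j : Fin 4) (y : Fin 3) :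
    cnt A j y = nn A i j 0 y + nn A i j 1 y + nn A i j 2 y := by
  rw [cnt, card_filter_and_sum A (fun r => A r j = y) i, Fin.sum_univ_three,
    nn_comm, nn_comm, nn_comm]

lemma cnt_total (i : Fin 4) : cnt A i 0 + cnt A i 1 + cnt A i 2 = 12 := by
  have h := Finset.card_eq_sum_card_fiberwise
    (s := (Finset.univ : Finset (Fin 12))) (t := Finset.univ) (f := fun r => A r i) (by simp)
  simp only [Finset.card_univ, Fintype.card_fin, Fin.sum_univ_three] at h
  rw [cnt, cnt, cnt]
  omega

lemma nn_zero (hA : IsCAFE A) (i j : Fin 4) (hij : i ≠ j) (x : Fin 3)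
    (he : s((i, x), (j, x)) ∈ EdgeSet) : nn A i j x x = 0 := by
  rw [nn, Finset.card_eq_zero, Finset.filter_eq_empty_iff]
  rintro r - ⟨h1, h2⟩
  exact hA.1 r i j hij (by rw [h1, h2]; exact he)

lemma nn_pos (hA : IsCAFE A) (i j : Fin 4) (hij : i ≠ j) (x y : Fin 3)
    (he : s((i, x), (j, y)) ∉ EdgeSet) : 1 ≤ nn A i j x y := by
  obtain ⟨r, h1, h2⟩ := hA.2 i j hij x y he
  rw [nn, Nat.one_le_iff_ne_zero, ← Nat.pos_iff_ne_zero, Finset.card_pos]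
  exact ⟨r, by simp [h1, h2]⟩

lemma nbb_one (hA : IsCAFE A) :
    nn A 0 1 1 1 = 1 ∧ nn A 0 1 2 2 = 1 ∧ nn A 0 2 0 0 = 1 ∧ nn A 0 2 2 2 = 1 ∧ nn A 0 3 0 0 = 1 ∧ nn A 0 3 1 1 = 1 ∧ nn A 1 2 0 0 = 1 ∧ nn A 1 2 1 1 = 1 ∧ nn A 1 3 0 0 = 1 ∧ nn A 1 3 2 2 = 1 ∧ nn A 2 3 1 1 = 1 ∧ nn A 2 3 2 2 = 1 := by
  have hlo00 : 3 ≤ cnt A 0 0 := by have h := cnt_row A 0 2 0; have p0 := (nn_pos A hA 0 2 (by decide) 0 0 (by decide)); have p1 := (nn_pos A hA 0 2 (by decide) 0 1 (by decide)); have p2 := (nn_pos A hA 0 2 (by decide) 0 2 (by decide)); omega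
  have hlo01 : 3 ≤ cnt A 0 1 := by have h := cnt_row A 0 1 1; have p0 := (nn_pos A hA 0 1 (by decide) 1 0 (by decide)); have p1 := (nn_pos A hA 0 1 (by decide) 1 1 (by decide)); have p2 := (nn_pos A hA 0 1 (by decide) 1 2 (by decide)); omega
  have hlo02 : 3 ≤ cnt A 0 2 := by have h := cnt_row A 0 1 2; have p0 := (nn_pos A hA 0 1 (by decide) 2 0 (by decide)); have p1 := (nn_pos A hA 0 1 (by decide) 2 1 (by decide)); have p2 := (nn_pos A hA 0 1 (by decide) 2 2 (by decide)); omega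
  have hlo10 : 3 ≤ cnt A 1 0 := by have h := cnt_row A 1 2 0; have p0 := (nn_pos A hA 1 2 (by decide) 0 0 (by decide)); have p1 := (nn_pos A hA 1 2 (by decide) 0 1 (by decide)); have p2 := (nn_pos A hA 1 2 (by decide) 0 2 (by decide)); omega
  have hlo11 : 3 ≤ cnt A 1 1 := by have h := cnt_col A 0 1 1; have p0 := (nn_pos A hA 0 1 (by decide) 0 1 (by decide)); have p1 := (nn_pos A hA 0 1 (by decide) 1 1 (by decide)); have p2 := (nn_pos A hA 0 1 (by decide) 2 1 (by decide)); omega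
  have hlo12 : 3 ≤ cnt A 1 2 := by have h := cnt_col A 0 1 2; have p0 := (nn_pos A hA 0 1 (by decide) 0 2 (by decide)); have p1 := (nn_pos A hA 0 1 (by decide) 1 2 (by decide)); have p2 := (nn_pos A hA 0 1 (by decide) 2 2 (by decide)); omega
  have hlo20 : 3 ≤ cnt A 2 0 := by have h := cnt_col A 0 2 0; have p0 := (nn_pos A hA 0 2 (by decide) 0 0 (by decide)); have p1 := (nn_pos A hA 0 2 (by decide) 1 0 (by decide)); have p2 := (nn_pos A hA 0 2 (by decide) 2 0 (by decide)); omega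
  have hlo21 : 3 ≤ cnt A 2 1 := by have h := cnt_col A 1 2 1; have p0 := (nn_pos A hA 1 2 (by decide) 0 1 (by decide)); have p1 := (nn_pos A hA 1 2 (by decide) 1 1 (by decide)); have p2 := (nn_pos A hA 1 2 (by decide) 2 1 (by decide)); omega
  have hlo22 : 3 ≤ cnt A 2 2 := by have h := cnt_col A 0 2 2; have p0 := (nn_pos A hA 0 2 (by decide) 0 2 (by decide)); have p1 := (nn_pos A hA 0 2 (by decide) 1 2 (by decide)); have p2 := (nn_pos A hA 0 2 (by decide) 2 2 (by decide)); omega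
  have hlo30 : 3 ≤ cnt A 3 0 := by have h := cnt_col A 0 3 0; have p0 := (nn_pos A hA 0 3 (by decide) 0 0 (by decide)); have p1 := (nn_pos A hA 0 3 (by decide) 1 0 (by decide)); have p2 := (nn_pos A hA 0 3 (by decide) 2 0 (by decide)); omega
  have hlo31 : 3 ≤ cnt A 3 1 := by have h := cnt_col A 0 3 1; have p0 := (nn_pos A hA 0 3 (by decide) 0 1 (by decide)); have p1 := (nn_pos A hA 0 3 (by decide) 1 1 (by decide)); have p2 := (nn_pos A hA 0 3 (by decide) 2 1 (by decide)); omega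
  have hlo32 : 3 ≤ cnt A 3 2 := by have h := cnt_col A 1 3 2; have p0 := (nn_pos A hA 1 3 (by decide) 0 2 (by decide)); have p1 := (nn_pos A hA 1 3 (by decide) 1 2 (by decide)); have p2 := (nn_pos A hA 1 3 (by decide) 2 2 (by decide)); omega
  have hub01 : cnt A 0 0 + cnt A 1 0 ≤ 8 := by have hr0 := cnt_row A 0 1 0; have hr1 := cnt_row A 0 1 1; have hr2 := cnt_row A 0 1 2; have hcm := cnt_col A 0 1 0; have hz := nn_zero A hA 0 1 (by decide) 0 (by decide); have q11 := (nn_pos A hA 0 1 (by decide) 1 1 (by decide)); have q12 := (nn_pos A hA 0 1 (by decide) 1 2 (by decide)); have q21 := (nn_pos A hA 0 1 (by decide) 2 1 (by decide)); have q22 := (nn_pos A hA 0 1 (by decide) 2 2 (by decide)); have ht := cnt_total A 0; omega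
  have hub02 : cnt A 0 1 + cnt A 2 1 ≤ 8 := by have hr0 := cnt_row A 0 2 0; have hr1 := cnt_row A 0 2 1; have hr2 := cnt_row A 0 2 2; have hcm := cnt_col A 0 2 1; have hz := nn_zero A hA 0 2 (by decide) 1 (by decide); have q00 := (nn_pos A hA 0 2 (by decide) 0 0 (by decide)); have q02 := (nn_pos A hA 0 2 (by decide) 0 2 (by decide)); have q20 := (nn_pos A hA 0 2 (by decide) 2 0 (by decide)); have q22 := (nn_pos A hA 0 2 (by decide) 2 2 (by decide)); have ht := cnt_total A 0; omega
  have hub03 : cnt A 0 2 + cnt A 3 2 ≤ 8 := by have hr0 := cnt_row A 0 3 0; have hr1 := cnt_row A 0 3 1; have hr2 := cnt_row A 0 3 2; have hcm := cnt_col A 0 3 2; have hz := nn_zero A hA 0 3 (by decide) 2 (by decide); have q00 := (nn_pos A hA 0 3 (by decide) 0 0 (by decide)); have q01 := (nn_pos A hA 0 3 (by decide) 0 1 (by decide)); have q10 := (nn_pos A hA 0 3 (by decide) 1 0 (by decide)); have q11 := (nn_pos A hA 0 3 (by decide) 1 1 (by decide)); have ht := cnt_total A 0; omega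
  have hub12 : cnt A 1 2 + cnt A 2 2 ≤ 8 := by have hr0 := cnt_row A 1 2 0; have hr1 := cnt_row A 1 2 1; have hr2 := cnt_row A 1 2 2; have hcm := cnt_col A 1 2 2; have hz := nn_zero A hA 1 2 (by decide) 2 (by decide); have q00 := (nn_pos A hA 1 2 (by decide) 0 0 (by decide)); have q01 := (nn_pos A hA 1 2 (by decide) 0 1 (by decide)); have q10 := (nn_pos A hA 1 2 (by decide) 1 0 (by decide)); have q11 := (nn_pos A hA 1 2 (by decide) 1 1 (by decide)); have ht := cnt_total A 1; omega
  have hub13 : cnt A 1 1 + cnt A 3 1 ≤ 8 := by have hr0 := cnt_row A 1 3 0; have hr1 := cnt_row A 1 3 1; have hr2 := cnt_row A 1 3 2; have hcm := cnt_col A 1 3 1; have hz := nn_zero A hA 1 3 (by decide) 1 (by decide); have q00 := (nn_pos A hA 1 3 (by decide) 0 0 (by decide)); have q02 := (nn_pos A hA 1 3 (by decide) 0 2 (by decide)); have q20 := (nn_pos A hA 1 3 (by decide) 2 0 (by decide)); have q22 := (nn_pos A hA 1 3 (by decide) 2 2 (by decide)); have ht := cnt_total A 1; omega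
  have hub23 : cnt A 2 0 + cnt A 3 0 ≤ 8 := by have hr0 := cnt_row A 2 3 0; have hr1 := cnt_row A 2 3 1; have hr2 := cnt_row A 2 3 2; have hcm := cnt_col A 2 3 0; have hz := nn_zero A hA 2 3 (by decide) 0 (by decide); have q11 := (nn_pos A hA 2 3 (by decide) 1 1 (by decide)); have q12 := (nn_pos A hA 2 3 (by decide) 1 2 (by decide)); have q21 := (nn_pos A hA 2 3 (by decide) 2 1 (by decide)); have q22 := (nn_pos A hA 2 3 (by decide) 2 2 (by decide)); have ht := cnt_total A 2; omega
  have ht0 := cnt_total A 0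
  have ht1 := cnt_total A 1
  have ht2 := cnt_total A 2
  have ht3 := cnt_total A 3
  have heq01 : cnt A 0 0 + cnt A 1 0 = 8 := by omega
  have heq02 : cnt A 0 1 + cnt A 2 1 = 8 := by omega
  have heq03 : cnt A 0 2 + cnt A 3 2 = 8 := by omega
  have heq12 : cnt A 1 2 + cnt A 2 2 = 8 := by omega
  have heq13 : cnt A 1 1 + cnt A 3 1 = 8 := by omega
  have heq23 : cnt A 2 0 + cnt A 3 0 = 8 := by omega
  refine ⟨?_, ?_, ?_, ?_, ?_, ?_, ?_, ?_, ?_, ?_, ?_, ?_⟩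
  · have hr0 := cnt_row A 0 1 0; have hr1 := cnt_row A 0 1 1; have hr2 := cnt_row A 0 1 2; have hcm := cnt_col A 0 1 0; have hz := nn_zero A hA 0 1 (by decide) 0 (by decide); have q11 := (nn_pos A hA 0 1 (by decide) 1 1 (by decide)); have q12 := (nn_pos A hA 0 1 (by decide) 1 2 (by decide)); have q21 := (nn_pos A hA 0 1 (by decide) 2 1 (by decide)); have q22 := (nn_pos A hA 0 1 (by decide) 2 2 (by decide)); omega
  · have hr0 := cnt_row A 0 1 0; have hr1 := cnt_row A 0 1 1; have hr2 := cnt_row A 0 1 2; have hcm := cnt_col A 0 1 0; have hz := nn_zero A hA 0 1 (by decide) 0 (by decide); have q11 := (nn_pos A hA 0 1 (by decide) 1 1 (by decide)); have q12 := (nn_pos A hA 0 1 (by decide) 1 2 (by decide)); have q21 := (nn_pos A hA 0 1 (by decide) 2 1 (by decide)); have q22 := (nn_pos A hA 0 1 (by decide) 2 2 (by decide)); omega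
  · have hr0 := cnt_row A 0 2 0; have hr1 := cnt_row A 0 2 1; have hr2 := cnt_row A 0 2 2; have hcm := cnt_col A 0 2 1; have hz := nn_zero A hA 0 2 (by decide) 1 (by decide); have q00 := (nn_pos A hA 0 2 (by decide) 0 0 (by decide)); have q02 := (nn_pos A hA 0 2 (by decide) 0 2 (by decide)); have q20 := (nn_pos A hA 0 2 (by decide) 2 0 (by decide)); have q22 := (nn_pos A hA 0 2 (by decide) 2 2 (by decide)); omega
  · have hr0 := cnt_row A 0 2 0; have hr1 := cnt_row A 0 2 1; have hr2 := cnt_row A 0 2 2; have hcm := cnt_col A 0 2 1; have hz := nn_zero A hA 0 2 (by decide) 1 (by decide); have q00 := (nn_pos A hA 0 2 (by decide) 0 0 (by decide)); have q02 := (nn_pos A hA 0 2 (by decide) 0 2 (by decide)); have q20 := (nn_pos A hA 0 2 (by decide) 2 0 (by decide)); have q22 := (nn_pos A hA 0 2 (by decide) 2 2 (by decide)); omega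
  · have hr0 := cnt_row A 0 3 0; have hr1 := cnt_row A 0 3 1; have hr2 := cnt_row A 0 3 2; have hcm := cnt_col A 0 3 2; have hz := nn_zero A hA 0 3 (by decide) 2 (by decide); have q00 := (nn_pos A hA 0 3 (by decide) 0 0 (by decide)); have q01 := (nn_pos A hA 0 3 (by decide) 0 1 (by decide)); have q10 := (nn_pos A hA 0 3 (by decide) 1 0 (by decide)); have q11 := (nn_pos A hA 0 3 (by decide) 1 1 (by decide)); omega
  · have hr0 := cnt_row A 0 3 0; have hr1 := cnt_row A 0 3 1; have hr2 := cnt_row A 0 3 2; have hcm := cnt_col A 0 3 2; have hz := nn_zero A hA 0 3 (by decide) 2 (by decide); have q00 := (nn_pos A hA 0 3 (by decide) 0 0 (by decide)); have q01 := (nn_pos A hA 0 3 (by decide) 0 1 (by decide)); have q10 := (nn_pos A hA 0 3 (by decide) 1 0 (by decide)); have q11 := (nn_pos A hA 0 3 (by decide) 1 1 (by decide)); omega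
  · have hr0 := cnt_row A 1 2 0; have hr1 := cnt_row A 1 2 1; have hr2 := cnt_row A 1 2 2; have hcm := cnt_col A 1 2 2; have hz := nn_zero A hA 1 2 (by decide) 2 (by decide); have q00 := (nn_pos A hA 1 2 (by decide) 0 0 (by decide)); have q01 := (nn_pos A hA 1 2 (by decide) 0 1 (by decide)); have q10 := (nn_pos A hA 1 2 (by decide) 1 0 (by decide)); have q11 := (nn_pos A hA 1 2 (by decide) 1 1 (by decide)); omega
  · have hr0 := cnt_row A 1 2 0; have hr1 := cnt_row A 1 2 1; have hr2 := cnt_row A 1 2 2; have hcm := cnt_col A 1 2 2; have hz := nn_zero A hA 1 2 (by decide) 2 (by decide); have q00 := (nn_pos A hA 1 2 (by decide) 0 0 (by decide)); have q01 := (nn_pos A hA 1 2 (by decide) 0 1 (by decide)); have q10 := (nn_pos A hA 1 2 (by decide) 1 0 (by decide)); have q11 := (nn_pos A hA 1 2 (by decide) 1 1 (by decide)); omega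
  · have hr0 := cnt_row A 1 3 0; have hr1 := cnt_row A 1 3 1; have hr2 := cnt_row A 1 3 2; have hcm := cnt_col A 1 3 1; have hz := nn_zero A hA 1 3 (by decide) 1 (by decide); have q00 := (nn_pos A hA 1 3 (by decide) 0 0 (by decide)); have q02 := (nn_pos A hA 1 3 (by decide) 0 2 (by decide)); have q20 := (nn_pos A hA 1 3 (by decide) 2 0 (by decide)); have q22 := (nn_pos A hA 1 3 (by decide) 2 2 (by decide)); omega
  · have hr0 := cnt_row A 1 3 0; have hr1 := cnt_row A 1 3 1; have hr2 := cnt_row A 1 3 2; have hcm := cnt_col A 1 3 1; have hz := nn_zero A hA 1 3 (by decide) 1 (by decide); have q00 := (nn_pos A hA 1 3 (by decide) 0 0 (by decide)); have q02 := (nn_pos A hA 1 3 (by decide) 0 2 (by decide)); have q20 := (nn_pos A hA 1 3 (by decide) 2 0 (by decide)); have q22 := (nn_pos A hA 1 3 (by decide) 2 2 (by decide)); omega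
  · have hr0 := cnt_row A 2 3 0; have hr1 := cnt_row A 2 3 1; have hr2 := cnt_row A 2 3 2; have hcm := cnt_col A 2 3 0; have hz := nn_zero A hA 2 3 (by decide) 0 (by decide); have q11 := (nn_pos A hA 2 3 (by decide) 1 1 (by decide)); have q12 := (nn_pos A hA 2 3 (by decide) 1 2 (by decide)); have q21 := (nn_pos A hA 2 3 (by decide) 2 1 (by decide)); have q22 := (nn_pos A hA 2 3 (by decide) 2 2 (by decide)); omega
  · have hr0 := cnt_row A 2 3 0; have hr1 := cnt_row A 2 3 1; have hr2 := cnt_row A 2 3 2; have hcm := cnt_col A 2 3 0; have hz := nn_zero A hA 2 3 (by decide) 0 (by decide); have q11 := (nn_pos A hA 2 3 (by decide) 1 1 (by decide)); have q12 := (nn_pos A hA 2 3 (by decide) 1 2 (by decide)); have q21 := (nn_pos A hA 2 3 (by decide) 2 1 (by decide)); have q22 := (nn_pos A hA 2 3 (by decide) 2 2 (by decide)); omega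

/-- Number of coincident (equal-valued) column pairs in a row. -/
def ep (c : Fin 4 → Fin 3) : ℕ :=
  (if c 0 = c 1 then 1 else 0) + (if c 0 = c 2 then 1 else 0) + (if c 0 = c 3 then 1 else 0) +
  (if c 1 = c 2 then 1 else 0) + (if c 1 = c 3 then 1 else 0) + (if c 2 = c 3 then 1 else 0)

lemma ep_ge_one : ∀ c : Fin 4 → Fin 3, 1 ≤ ep c := by decide

lemma eqcard (i j : Fin 4) :
    (Finset.univ.filter fun r : Fin 12 => A r i = A r j).card
      = nn A i j 0 0 + nn A i j 1 1 + nn A i j 2 2 := by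
  rw [card_filter_and_sum A (fun r => A r i = A r j) j, Fin.sum_univ_three]
  have h : ∀ y : Fin 3, (Finset.univ.filter fun r : Fin 12 => A r i = A r j ∧ A r j = y)
      = Finset.univ.filter fun r : Fin 12 => A r i = y ∧ A r j = y := by
    intro y; ext r; simp only [Finset.mem_filter]; constructor
    · rintro ⟨hr, h1, h2⟩; exact ⟨hr, h1.trans h2, h2⟩
    · rintro ⟨hr, h1, h2⟩; exact ⟨hr, h1.trans h2.symm, h2⟩
  rw [h 0, h 1, h 2]; rfl

lemma exu_of_card (p : Fin 12 → Prop) [DecidablePred p]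
    (h : (Finset.univ.filter p).card = 1) : ∃! r, p r := by
  obtain ⟨a, ha⟩ := Finset.card_eq_one.1 h
  have hpa : p a := by
    have : a ∈ Finset.univ.filter p := ha ▸ Finset.mem_singleton_self a
    exact (Finset.mem_filter.1 this).2
  refine ⟨a, hpa, fun r hr => ?_⟩
  have : r ∈ Finset.univ.filter p := Finset.mem_filter.2 ⟨Finset.mem_univ r, hr⟩
  rw [ha, Finset.mem_singleton] at this; exact this

def M0 : Fin 12 → Fin 4 → Fin 3 := ![![1, 1, 0, 2], ![2, 2, 0, 1], ![0, 1, 0, 2], ![2, 0, 2, 1], ![0, 1, 2, 0], ![1, 0, 2, 1], ![1, 0, 0, 2], ![0, 1, 1, 2], ![1, 0, 2, 0], ![0, 2, 1, 2], ![0, 2, 1, 1], ![0, 1, 2, 2]]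
def M1 : Fin 12 → Fin 4 → Fin 3 := ![![1, 1, 2, 0], ![2, 2, 1, 0], ![0, 2, 0, 1], ![2, 1, 2, 0], ![0, 2, 1, 0], ![1, 2, 0, 1], ![2, 0, 0, 1], ![2, 1, 1, 0], ![2, 0, 1, 0], ![1, 2, 0, 2], ![2, 0, 1, 1], ![1, 0, 2, 2]]
def mk (d : Fin 12) (e : Bool) : Fin 4 → Fin 3 := if e then M1 d else M0 d
def dI : Fin 12 → Fin 4 := ![0, 0, 0, 0, 0, 0, 1, 1, 1, 1, 2, 2]
def dJ : Fin 12 → Fin 4 := ![1, 1, 2, 2, 3, 3, 2, 2, 3, 3, 3, 3]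
def dB : Fin 12 → Fin 3 := ![1, 2, 0, 2, 0, 1, 0, 1, 0, 2, 1, 2]

set_option maxRecDepth 2000 in
lemma hkeyD : ∀ c : Fin 4 → Fin 3, ∀ d d' : Fin 12, ep c = 1 →
    c (dI d) = dB d → c (dJ d) = dB d → c (dI d') = dB d' → c (dJ d') = dB d' →
    d = d' := by decide

set_option maxRecDepth 2000 in
lemma hshapeD : ∀ c : Fin 4 → Fin 3, ∀ d : Fin 12, ep c = 1 →
    c (dI d) = dB d → c (dJ d) = dB d → c = mk d true ∨ c = mk d false := by decide

lemma sup0 : ∀ d : Fin 12, ∀ e : Bool, mk d e 0 = 1 → mk d e 1 = 2 → (d = 5 ∧ e = true) ∨ (d = 9 ∧ e = true) := by decide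
lemma sup1 : ∀ d : Fin 12, ∀ e : Bool, mk d e 0 = 2 → mk d e 1 = 1 → (d = 3 ∧ e = true) ∨ (d = 7 ∧ e = true) := by decide
lemma sup2 : ∀ d : Fin 12, ∀ e : Bool, mk d e 0 = 0 → mk d e 2 = 2 → (d = 4 ∧ e = false) ∨ (d = 11 ∧ e = false) := by decide
lemma sup3 : ∀ d : Fin 12, ∀ e : Bool, mk d e 0 = 2 → mk d e 2 = 0 → (d = 1 ∧ e = false) ∨ (d = 6 ∧ e = true) := by decide
lemma sup4 : ∀ d : Fin 12, ∀ e : Bool, mk d e 0 = 0 → mk d e 3 = 1 → (d = 2 ∧ e = true) ∨ (d = 10 ∧ e = false) := by decide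
lemma sup5 : ∀ d : Fin 12, ∀ e : Bool, mk d e 0 = 1 → mk d e 3 = 0 → (d = 0 ∧ e = true) ∨ (d = 8 ∧ e = false) := by decide
lemma sup6 : ∀ d : Fin 12, ∀ e : Bool, mk d e 1 = 0 → mk d e 2 = 1 → (d = 8 ∧ e = true) ∨ (d = 10 ∧ e = true) := by decide
lemma sup7 : ∀ d : Fin 12, ∀ e : Bool, mk d e 1 = 1 → mk d e 2 = 0 → (d = 0 ∧ e = false) ∨ (d = 2 ∧ e = false) := by decide
lemma sup8 : ∀ d : Fin 12, ∀ e : Bool, mk d e 1 = 0 → mk d e 3 = 2 → (d = 6 ∧ e = false) ∨ (d = 11 ∧ e = true) := by decide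
lemma sup9 : ∀ d : Fin 12, ∀ e : Bool, mk d e 1 = 2 → mk d e 3 = 0 → (d = 1 ∧ e = true) ∨ (d = 4 ∧ e = true) := by decide
lemma sup10 : ∀ d : Fin 12, ∀ e : Bool, mk d e 2 = 1 → mk d e 3 = 2 → (d = 7 ∧ e = false) ∨ (d = 9 ∧ e = false) := by decide
lemma sup11 : ∀ d : Fin 12, ∀ e : Bool, mk d e 2 = 2 → mk d e 3 = 1 → (d = 3 ∧ e = false) ∨ (d = 5 ∧ e = false) := by decide

set_option maxRecDepth 2000 in
set_option maxHeartbeats 2000000 in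
set_option synthInstance.maxHeartbeats 400000 in
set_option synthInstance.maxSize 2000 in
lemma mainEps' : ∀ e0 e1 e2 e3 e4 e5 e6 e7 e8 e9 e10 e11 : Bool,
    (e5 = true ∨ e9 = true) →
    (e3 = true ∨ e7 = true) →
    (e4 = false ∨ e11 = false) →
    (e1 = false ∨ e6 = true) →
    (e2 = true ∨ e10 = false) →
    (e0 = true ∨ e8 = false) →
    (e8 = true ∨ e10 = true) →
    (e0 = false ∨ e2 = false) →
    (e6 = false ∨ e11 = true) →
    (e1 = true ∨ e4 = true) →
    (e7 = false ∨ e9 = false) →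
    (e3 = false ∨ e5 = false) →
    ∃ i : Fin 4, (∀ x : Fin 3,
      (∑ d : Fin 12, if mk d (![e0, e1, e2, e3, e4, e5, e6, e7, e8, e9, e10, e11] d) i = x then 1 else 0) = 4) ∧
      ∀ i' : Fin 4, (∀ x : Fin 3,
        (∑ d : Fin 12, if mk d (![e0, e1, e2, e3, e4, e5, e6, e7, e8, e9, e10, e11] d) i' = x then 1 else 0) = 4) → i' = i := by decide

theorem exactly_one_uniform_column (A : Fin 12 → Fin 4 → Fin 3) (hA : IsCAFE A) :
    ∃! i : Fin 4, ∀ s : Fin 3,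
      (Finset.univ.filter (fun r : Fin 12 => A r i = s)).card = 4 := by
  obtain ⟨hb011, hb012, hb020, hb022, hb030, hb031, hb120, hb121, hb130, hb132, hb231, hb232⟩ := nbb_one A hA
  have e01 : ∑ r : Fin 12, (if A r 0 = A r 1 then 1 else 0) = 2 := by
    rw [← Finset.card_filter, eqcard A 0 1, nn_zero A hA 0 1 (by decide) 0 (by decide),
      hb011, hb012]
  have e02 : ∑ r : Fin 12, (if A r 0 = A r 2 then 1 else 0) = 2 := by
    rw [← Finset.card_filter, eqcard A 0 2, nn_zero A hA 0 2 (by decide) 1 (by decide),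
      hb020, hb022]
  have e03 : ∑ r : Fin 12, (if A r 0 = A r 3 then 1 else 0) = 2 := by
    rw [← Finset.card_filter, eqcard A 0 3, nn_zero A hA 0 3 (by decide) 2 (by decide),
      hb030, hb031]
  have e12 : ∑ r : Fin 12, (if A r 1 = A r 2 then 1 else 0) = 2 := by
    rw [← Finset.card_filter, eqcard A 1 2, nn_zero A hA 1 2 (by decide) 2 (by decide),
      hb120, hb121]
  have e13 : ∑ r : Fin 12, (if A r 1 = A r 3 then 1 else 0) = 2 := by
    rw [← Finset.card_filter, eqcard A 1 3, nn_zero A hA 1 3 (by decide) 1 (by decide),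
      hb130, hb132]
  have e23 : ∑ r : Fin 12, (if A r 2 = A r 3 then 1 else 0) = 2 := by
    rw [← Finset.card_filter, eqcard A 2 3, nn_zero A hA 2 3 (by decide) 0 (by decide),
      hb231, hb232]
  have hsum : ∑ r : Fin 12, ep (A r) = 12 := by
    simp only [ep, Finset.sum_add_distrib, e01, e02, e03, e12, e13, e23]
  have hep1 : ∀ r, ep (A r) = 1 := by
    intro r
    have h1 := ep_ge_one (A r)
    have h2 : ep (A r) + ∑ x ∈ Finset.univ.erase r, ep (A x) = ∑ x : Fin 12, ep (A x) :=
      Finset.add_sum_erase Finset.univ (fun r => ep (A r)) (Finset.mem_univ r)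
    have h3 : (Finset.univ.erase r).card • 1 ≤ ∑ x ∈ Finset.univ.erase r, ep (A x) :=
      Finset.card_nsmul_le_sum _ _ _ (fun x _ => ep_ge_one (A x))
    rw [Finset.card_erase_of_mem (Finset.mem_univ r), Finset.card_univ] at h3
    simp only [Fintype.card_fin, smul_eq_mul, mul_one] at h3
    omega
  have hEU : ∀ dd : Fin 12, ∃! r, A r (dI dd) = dB dd ∧ A r (dJ dd) = dB dd := by
    intro dd
    fin_cases dd
    · exact exu_of_card (fun r => A r 0 = 1 ∧ A r 1 = 1) hb011
    · exact exu_of_card (fun r => A r 0 = 2 ∧ A r 1 = 2) hb012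
    · exact exu_of_card (fun r => A r 0 = 0 ∧ A r 2 = 0) hb020
    · exact exu_of_card (fun r => A r 0 = 2 ∧ A r 2 = 2) hb022
    · exact exu_of_card (fun r => A r 0 = 0 ∧ A r 3 = 0) hb030
    · exact exu_of_card (fun r => A r 0 = 1 ∧ A r 3 = 1) hb031
    · exact exu_of_card (fun r => A r 1 = 0 ∧ A r 2 = 0) hb120
    · exact exu_of_card (fun r => A r 1 = 1 ∧ A r 2 = 1) hb121
    · exact exu_of_card (fun r => A r 1 = 0 ∧ A r 3 = 0) hb130
    · exact exu_of_card (fun r => A r 1 = 2 ∧ A r 3 = 2) hb132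
    · exact exu_of_card (fun r => A r 2 = 1 ∧ A r 3 = 1) hb231
    · exact exu_of_card (fun r => A r 2 = 2 ∧ A r 3 = 2) hb232
  set g : Fin 12 → Fin 12 := fun d => (hEU d).choose with hg
  have hgspec : ∀ d, A (g d) (dI d) = dB d ∧ A (g d) (dJ d) = dB d :=
    fun d => (hEU d).choose_spec.1
  have hginj : Function.Injective g := by
    intro d d' h
    have s1 := hgspec d
    have s2 := hgspec d'
    rw [← h] at s2
    exact hkeyD (A (g d)) d d' (hep1 (g d)) s1.1 s1.2 s2.1 s2.2
  have hgbij : Function.Bijective g := Finite.injective_iff_bijective.1 hginj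
  have hεex : ∀ d, ∃ e : Bool, A (g d) = mk d e := by
    intro d
    rcases hshapeD (A (g d)) d (hep1 (g d)) (hgspec d).1 (hgspec d).2 with h | h
    · exact ⟨true, h⟩
    · exact ⟨false, h⟩
  set ε : Fin 12 → Bool := fun d => (hεex d).choose with hεdef
  have hε : ∀ d, A (g d) = mk d (ε d) := fun d => (hεex d).choose_spec
  have hcnt : ∀ (i : Fin 4) (x : Fin 3),
      (Finset.univ.filter (fun r : Fin 12 => A r i = x)).card
        = ∑ d : Fin 12, if mk d (ε d) i = x then 1 else 0 := by
    intro i x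
    rw [Finset.card_filter,
      ← Equiv.sum_comp (Equiv.ofBijective g hgbij) (fun r => if A r i = x then 1 else 0)]
    refine Finset.sum_congr rfl fun d _ => ?_
    show (if A (g d) i = x then 1 else 0) = _
    rw [hε d]
  have K0 : ε 5 = true ∨ ε 9 = true := by
    obtain ⟨r, h1, h2⟩ := hA.2 0 1 (by decide) 1 2 (by decide)
    obtain ⟨d, rfl⟩ := hgbij.surjective r
    rw [hε d] at h1 h2
    rcases sup0 d (ε d) h1 h2 with ⟨rfl, hv⟩ | ⟨rfl, hv⟩
    · exact Or.inl hv
    · exact Or.inr hv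
  have K1 : ε 3 = true ∨ ε 7 = true := by
    obtain ⟨r, h1, h2⟩ := hA.2 0 1 (by decide) 2 1 (by decide)
    obtain ⟨d, rfl⟩ := hgbij.surjective r
    rw [hε d] at h1 h2
    rcases sup1 d (ε d) h1 h2 with ⟨rfl, hv⟩ | ⟨rfl, hv⟩
    · exact Or.inl hv
    · exact Or.inr hv
  have K2 : ε 4 = false ∨ ε 11 = false := by
    obtain ⟨r, h1, h2⟩ := hA.2 0 2 (by decide) 0 2 (by decide)
    obtain ⟨d, rfl⟩ := hgbij.surjective r
    rw [hε d] at h1 h2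
    rcases sup2 d (ε d) h1 h2 with ⟨rfl, hv⟩ | ⟨rfl, hv⟩
    · exact Or.inl hv
    · exact Or.inr hv
  have K3 : ε 1 = false ∨ ε 6 = true := by
    obtain ⟨r, h1, h2⟩ := hA.2 0 2 (by decide) 2 0 (by decide)
    obtain ⟨d, rfl⟩ := hgbij.surjective r
    rw [hε d] at h1 h2
    rcases sup3 d (ε d) h1 h2 with ⟨rfl, hv⟩ | ⟨rfl, hv⟩
    · exact Or.inl hv
    · exact Or.inr hv
  have K4 : ε 2 = true ∨ ε 10 = false := by
    obtain ⟨r, h1, h2⟩ := hA.2 0 3 (by decide) 0 1 (by decide)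
    obtain ⟨d, rfl⟩ := hgbij.surjective r
    rw [hε d] at h1 h2
    rcases sup4 d (ε d) h1 h2 with ⟨rfl, hv⟩ | ⟨rfl, hv⟩
    · exact Or.inl hv
    · exact Or.inr hv
  have K5 : ε 0 = true ∨ ε 8 = false := by
    obtain ⟨r, h1, h2⟩ := hA.2 0 3 (by decide) 1 0 (by decide)
    obtain ⟨d, rfl⟩ := hgbij.surjective r
    rw [hε d] at h1 h2
    rcases sup5 d (ε d) h1 h2 with ⟨rfl, hv⟩ | ⟨rfl, hv⟩
    · exact Or.inl hv
    · exact Or.inr hv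
  have K6 : ε 8 = true ∨ ε 10 = true := by
    obtain ⟨r, h1, h2⟩ := hA.2 1 2 (by decide) 0 1 (by decide)
    obtain ⟨d, rfl⟩ := hgbij.surjective r
    rw [hε d] at h1 h2
    rcases sup6 d (ε d) h1 h2 with ⟨rfl, hv⟩ | ⟨rfl, hv⟩
    · exact Or.inl hv
    · exact Or.inr hv
  have K7 : ε 0 = false ∨ ε 2 = false := by
    obtain ⟨r, h1, h2⟩ := hA.2 1 2 (by decide) 1 0 (by decide)
    obtain ⟨d, rfl⟩ := hgbij.surjective r
    rw [hε d] at h1 h2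
    rcases sup7 d (ε d) h1 h2 with ⟨rfl, hv⟩ | ⟨rfl, hv⟩
    · exact Or.inl hv
    · exact Or.inr hv
  have K8 : ε 6 = false ∨ ε 11 = true := by
    obtain ⟨r, h1, h2⟩ := hA.2 1 3 (by decide) 0 2 (by decide)
    obtain ⟨d, rfl⟩ := hgbij.surjective r
    rw [hε d] at h1 h2
    rcases sup8 d (ε d) h1 h2 with ⟨rfl, hv⟩ | ⟨rfl, hv⟩
    · exact Or.inl hv
    · exact Or.inr hv
  have K9 : ε 1 = true ∨ ε 4 = true := by
    obtain ⟨r, h1, h2⟩ := hA.2 1 3 (by decide) 2 0 (by decide)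
    obtain ⟨d, rfl⟩ := hgbij.surjective r
    rw [hε d] at h1 h2
    rcases sup9 d (ε d) h1 h2 with ⟨rfl, hv⟩ | ⟨rfl, hv⟩
    · exact Or.inl hv
    · exact Or.inr hv
  have K10 : ε 7 = false ∨ ε 9 = false := by
    obtain ⟨r, h1, h2⟩ := hA.2 2 3 (by decide) 1 2 (by decide)
    obtain ⟨d, rfl⟩ := hgbij.surjective r
    rw [hε d] at h1 h2
    rcases sup10 d (ε d) h1 h2 with ⟨rfl, hv⟩ | ⟨rfl, hv⟩
    · exact Or.inl hv
    · exact Or.inr hv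
  have K11 : ε 3 = false ∨ ε 5 = false := by
    obtain ⟨r, h1, h2⟩ := hA.2 2 3 (by decide) 2 1 (by decide)
    obtain ⟨d, rfl⟩ := hgbij.surjective r
    rw [hε d] at h1 h2
    rcases sup11 d (ε d) h1 h2 with ⟨rfl, hv⟩ | ⟨rfl, hv⟩
    · exact Or.inl hv
    · exact Or.inr hv
  have result := mainEps' (ε 0) (ε 1) (ε 2) (ε 3) (ε 4) (ε 5) (ε 6) (ε 7) (ε 8) (ε 9) (ε 10) (ε 11) K0 K1 K2 K3 K4 K5 K6 K7 K8 K9 K10 K11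
  have hveq : (![ε 0, ε 1, ε 2, ε 3, ε 4, ε 5, ε 6, ε 7, ε 8, ε 9, ε 10, ε 11] : Fin 12 → Bool) = ε := by
    funext d; fin_cases d <;> rfl
  rw [hveq] at result
  obtain ⟨i, hi, hu⟩ := result
  exact ⟨i, fun x => (hcnt i x).trans (hi x),
    fun i' h' => hu i' (fun x => (hcnt i' x).symm.trans (h' x))⟩
end

section
/- G is arc-transitive under the group generated by g₁ and g₂: for any two ordered pairs of adjacent vertices (u₁, w₁) and (u₂, w₂) with {u₁, w₁} and {u₂, w₂} edges of G, there exists an element σ of the subgroup generated by g₁ and g₂ such that σ u₁ = u₂ and σ w₁ = w₂. -/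
/-- `g₁`: the product of the disjoint transpositions
`(0,0)↔(1,0)`, `(0,1)↔(1,2)`, `(0,2)↔(1,1)`, `(2,1)↔(2,2)`, `(3,1)↔(3,2)`;
it fixes `(2,0)` and `(3,0)`. -/
def g₁ : Equiv.Perm (Fin 4 × Fin 3) :=
  Equiv.swap (0, 0) (1, 0) * Equiv.swap (0, 1) (1, 2) * Equiv.swap (0, 2) (1, 1) *
    Equiv.swap (2, 1) (2, 2) * Equiv.swap (3, 1) (3, 2)

/-- The 4-cycle `a → b → c → d → a`. -/
def cyc4 (a b c d : Fin 4 × Fin 3) : Equiv.Perm (Fin 4 × Fin 3) :=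
  Equiv.swap a d * Equiv.swap a c * Equiv.swap a b

/-- `g₂`: the product of the disjoint 4-cycles
`(0,0)→(1,2)→(2,0)→(3,2)→(0,0)`, `(1,0)→(2,2)→(3,0)→(0,2)→(1,0)`,
`(0,1)→(1,1)→(2,1)→(3,1)→(0,1)`. -/
def g₂ : Equiv.Perm (Fin 4 × Fin 3) :=
  cyc4 (0, 0) (1, 2) (2, 0) (3, 2) * cyc4 (1, 0) (2, 2) (3, 0) (0, 2) *
    cyc4 (0, 1) (1, 1) (2, 1) (3, 1)

lemma hg₁ : g₁ ∈ Subgroup.closure ({g₁, g₂} : Set (Equiv.Perm (Fin 4 × Fin 3))) :=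
  Subgroup.subset_closure (Set.mem_insert _ _)

lemma hg₂ : g₂ ∈ Subgroup.closure ({g₁, g₂} : Set (Equiv.Perm (Fin 4 × Fin 3))) :=
  Subgroup.subset_closure (Set.mem_insert_of_mem _ rfl)

lemma base_arc (u w : Fin 4 × Fin 3) (h : s(u, w) ∈ EdgeSet) :
    ∃ σ ∈ Subgroup.closure ({g₁, g₂} : Set (Equiv.Perm (Fin 4 × Fin 3))),
      σ (0, 0) = u ∧ σ (1, 0) = w := by
  simp only [EdgeSet, Set.mem_insert_iff, Set.mem_singleton_iff, Sym2.eq_iff] at h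
  rcases h with (⟨hu,hw⟩|⟨hu,hw⟩)|(⟨hu,hw⟩|⟨hu,hw⟩)|(⟨hu,hw⟩|⟨hu,hw⟩)|(⟨hu,hw⟩|⟨hu,hw⟩)|(⟨hu,hw⟩|⟨hu,hw⟩)|(⟨hu,hw⟩|⟨hu,hw⟩) <;> subst hu <;> subst hw
  · exact ⟨1, one_mem _, by decide, by decide⟩
  · exact ⟨g₁, hg₁, by decide, by decide⟩
  · exact ⟨g₂*g₂, mul_mem hg₂ hg₂, by decide, by decide⟩
  · exact ⟨g₂*g₂*g₁, mul_mem (mul_mem hg₂ hg₂) hg₁, by decide, by decide⟩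
  · exact ⟨g₁*g₂, mul_mem hg₁ hg₂, by decide, by decide⟩
  · exact ⟨g₁*g₂*g₁, mul_mem (mul_mem hg₁ hg₂) hg₁, by decide, by decide⟩
  · exact ⟨g₂*g₁*g₂, mul_mem (mul_mem hg₂ hg₁) hg₂, by decide, by decide⟩
  · exact ⟨g₂*g₁*g₂*g₁, mul_mem (mul_mem (mul_mem hg₂ hg₁) hg₂) hg₁, by decide, by decide⟩
  · exact ⟨g₂*g₂*g₂*g₁, mul_mem (mul_mem (mul_mem hg₂ hg₂) hg₂) hg₁, by decide, by decide⟩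
  · exact ⟨g₂*g₂*g₂, mul_mem (mul_mem hg₂ hg₂) hg₂, by decide, by decide⟩
  · exact ⟨g₂, hg₂, by decide, by decide⟩
  · exact ⟨g₂*g₁, mul_mem hg₂ hg₁, by decide, by decide⟩

theorem arc_transitive (u₁ w₁ u₂ w₂ : Fin 4 × Fin 3)
    (h₁ : s(u₁, w₁) ∈ EdgeSet) (h₂ : s(u₂, w₂) ∈ EdgeSet) :
    ∃ σ ∈ Subgroup.closure ({g₁, g₂} : Set (Equiv.Perm (Fin 4 × Fin 3))),
      σ u₁ = u₂ ∧ σ w₁ = w₂ := by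
  obtain ⟨σ₁, hσ₁, hu₁, hw₁⟩ := base_arc u₁ w₁ h₁
  obtain ⟨σ₂, hσ₂, hu₂, hw₂⟩ := base_arc u₂ w₂ h₂
  refine ⟨σ₂ * σ₁⁻¹, mul_mem hσ₂ (inv_mem hσ₁), ?_, ?_⟩
  · rw [Equiv.Perm.mul_apply, ← hu₁, (Equiv.Perm.inv_eq_iff_eq (f := σ₁)).mpr rfl, hu₂]
  · rw [Equiv.Perm.mul_apply, ← hw₁, (Equiv.Perm.inv_eq_iff_eq (f := σ₁)).mpr rfl, hw₂]
end
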